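/- Let A_k := Π_{i=1}^4 (a_i^2;p_i)_k / (K/a_i^2; L/p_i)_k where K = a_1a_2a_3a_4 and L = √(p_1p_2p_3p_4). Then for every k ≥ 1, A_k - A_{k-1} = Γ_{k-1} · (K L^{k-1} - 1)/(K L^{k-1}) · Π_{i=1}^4 (a_i^2;p_i)_{k-1} / (K/a_i^2; L/p_i)_k, where Γ_m := (a_1a_2(p_1p_2)^{m/2} - a_3a_4(p_3p_4)^{m/2})(a_1a_3(p_1p_3)^{m/2} - a_2a_4(p_2p_4)^{m/2})(a_1a_4(p_1p_4)^{m/2} - a_2a_3(p_2p_3)^{m/2}). -/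

import Mathlib

open Finset

/-- The q-shifted factorial `(a;q)_k`. -/
noncomputable def qPoch (a q : ℂ) (k : ℕ) : ℂ := ∏ j ∈ Finset.range k, (1 - a * q ^ j)

lemma key_alg (x1 x2 x3 x4 : ℂ)
    (h1 : x1 ≠ 0) (h2 : x2 ≠ 0) (h3 : x3 ≠ 0) (h4 : x4 ≠ 0) :
    (1 - x1 ^ 2) * (1 - x2 ^ 2) * (1 - x3 ^ 2) * (1 - x4 ^ 2)
      - (1 - x1 * x2 * x3 * x4 / x1 ^ 2) * (1 - x1 * x2 * x3 * x4 / x2 ^ 2) *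
        (1 - x1 * x2 * x3 * x4 / x3 ^ 2) * (1 - x1 * x2 * x3 * x4 / x4 ^ 2) =
    (x1 * x2 - x3 * x4) * (x1 * x3 - x2 * x4) * (x1 * x4 - x2 * x3) *
      ((x1 * x2 * x3 * x4 - 1) / (x1 * x2 * x3 * x4)) := by
  have hX : x1 * x2 * x3 * x4 ≠ 0 :=
    mul_ne_zero (mul_ne_zero (mul_ne_zero h1 h2) h3) h4
  have hD : x1 ^ 2 * x2 ^ 2 * x3 ^ 2 * x4 ^ 2 ≠ 0 :=
    mul_ne_zero (mul_ne_zero (mul_ne_zero (pow_ne_zero _ h1) (pow_ne_zero _ h2))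
      (pow_ne_zero _ h3)) (pow_ne_zero _ h4)
  have e1 : (1 : ℂ) - x1 * x2 * x3 * x4 / x1 ^ 2 = (x1 ^ 2 - x1 * x2 * x3 * x4) / x1 ^ 2 := by
    field_simp
  have e2 : (1 : ℂ) - x1 * x2 * x3 * x4 / x2 ^ 2 = (x2 ^ 2 - x1 * x2 * x3 * x4) / x2 ^ 2 := by
    field_simp
  have e3 : (1 : ℂ) - x1 * x2 * x3 * x4 / x3 ^ 2 = (x3 ^ 2 - x1 * x2 * x3 * x4) / x3 ^ 2 := by
    field_simp
  have e4 : (1 : ℂ) - x1 * x2 * x3 * x4 / x4 ^ 2 = (x4 ^ 2 - x1 * x2 * x3 * x4) / x4 ^ 2 := by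
    field_simp
  rw [e1, e2, e3, e4, div_mul_div_comm, div_mul_div_comm, div_mul_div_comm]
  conv_rhs => rw [← mul_div_assoc]
  rw [sub_div' hD, div_eq_div_iff hD hX]
  ring

lemma aux_div (Q1 Q2 Q3 Q4 R1 R2 R3 R4 u1 u2 u3 u4 v1 v2 v3 v4 : ℂ)
    (hR1 : R1 ≠ 0) (hR2 : R2 ≠ 0) (hR3 : R3 ≠ 0) (hR4 : R4 ≠ 0)
    (hv1 : v1 ≠ 0) (hv2 : v2 ≠ 0) (hv3 : v3 ≠ 0) (hv4 : v4 ≠ 0) :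
    Q1 * u1 * (Q2 * u2) * (Q3 * u3) * (Q4 * u4) / (R1 * v1 * (R2 * v2) * (R3 * v3) * (R4 * v4))
      - Q1 * Q2 * Q3 * Q4 / (R1 * R2 * R3 * R4) =
    (u1 * u2 * u3 * u4 - v1 * v2 * v3 * v4) *
      (Q1 * Q2 * Q3 * Q4 / (R1 * v1 * (R2 * v2) * (R3 * v3) * (R4 * v4))) := by
  have hDv : R1 * v1 * (R2 * v2) * (R3 * v3) * (R4 * v4) ≠ 0 :=
    mul_ne_zero (mul_ne_zero (mul_ne_zero (mul_ne_zero hR1 hv1) (mul_ne_zero hR2 hv2))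
      (mul_ne_zero hR3 hv3)) (mul_ne_zero hR4 hv4)
  have hD : R1 * R2 * R3 * R4 ≠ 0 :=
    mul_ne_zero (mul_ne_zero (mul_ne_zero hR1 hR2) hR3) hR4
  rw [div_sub_div _ _ hDv hD, ← mul_div_assoc, div_eq_div_iff (mul_ne_zero hDv hD) hDv]
  ring

theorem backward_difference_A
    (a1 a2 a3 a4 s1 s2 s3 s4 p1 p2 p3 p4 K L : ℂ)
    (A : ℕ → ℂ) (Γ : ℕ → ℂ)
    (ha1 : a1 ≠ 0) (ha2 : a2 ≠ 0) (ha3 : a3 ≠ 0) (ha4 : a4 ≠ 0)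
    (hs1 : s1 ≠ 0) (hs2 : s2 ≠ 0) (hs3 : s3 ≠ 0) (hs4 : s4 ≠ 0)
    (hp1 : s1 ^ 2 = p1) (hp2 : s2 ^ 2 = p2) (hp3 : s3 ^ 2 = p3) (hp4 : s4 ^ 2 = p4)
    (hK : K = a1 * a2 * a3 * a4) (hL : L = s1 * s2 * s3 * s4)
    (hA : ∀ k : ℕ, A k =
      (qPoch (a1 ^ 2) p1 k * qPoch (a2 ^ 2) p2 k * qPoch (a3 ^ 2) p3 k * qPoch (a4 ^ 2) p4 k) /
        (qPoch (K / a1 ^ 2) (L / p1) k * qPoch (K / a2 ^ 2) (L / p2) k *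
          qPoch (K / a3 ^ 2) (L / p3) k * qPoch (K / a4 ^ 2) (L / p4) k))
    (hΓ : ∀ m : ℕ, Γ m =
      (a1 * a2 * (s1 * s2) ^ m - a3 * a4 * (s3 * s4) ^ m) *
        (a1 * a3 * (s1 * s3) ^ m - a2 * a4 * (s2 * s4) ^ m) *
        (a1 * a4 * (s1 * s4) ^ m - a2 * a3 * (s2 * s3) ^ m))
    (hden : ∀ k : ℕ, qPoch (K / a1 ^ 2) (L / p1) k * qPoch (K / a2 ^ 2) (L / p2) k *
      qPoch (K / a3 ^ 2) (L / p3) k * qPoch (K / a4 ^ 2) (L / p4) k ≠ 0) :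
    ∀ k : ℕ, 1 ≤ k →
      A k - A (k - 1) =
        Γ (k - 1) * ((K * L ^ (k - 1) - 1) / (K * L ^ (k - 1))) *
          ((qPoch (a1 ^ 2) p1 (k - 1) * qPoch (a2 ^ 2) p2 (k - 1) *
              qPoch (a3 ^ 2) p3 (k - 1) * qPoch (a4 ^ 2) p4 (k - 1)) /
            (qPoch (K / a1 ^ 2) (L / p1) k * qPoch (K / a2 ^ 2) (L / p2) k *
              qPoch (K / a3 ^ 2) (L / p3) k * qPoch (K / a4 ^ 2) (L / p4) k)) := by
  intro k hk
  obtain ⟨m, rfl⟩ : ∃ m, k = m + 1 := ⟨k - 1, by omega⟩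
  simp only [Nat.add_sub_cancel]
  have hx1 : a1 * s1 ^ m ≠ 0 := mul_ne_zero ha1 (pow_ne_zero _ hs1)
  have hx2 : a2 * s2 ^ m ≠ 0 := mul_ne_zero ha2 (pow_ne_zero _ hs2)
  have hx3 : a3 * s3 ^ m ≠ 0 := mul_ne_zero ha3 (pow_ne_zero _ hs3)
  have hx4 : a4 * s4 ^ m ≠ 0 := mul_ne_zero ha4 (pow_ne_zero _ hs4)
  have key := key_alg (a1 * s1 ^ m) (a2 * s2 ^ m) (a3 * s3 ^ m) (a4 * s4 ^ m) hx1 hx2 hx3 hx4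
  have m1 : a1 ^ 2 * p1 ^ m = (a1 * s1 ^ m) ^ 2 := by rw [← hp1]; ring
  have m2 : a2 ^ 2 * p2 ^ m = (a2 * s2 ^ m) ^ 2 := by rw [← hp2]; ring
  have m3 : a3 ^ 2 * p3 ^ m = (a3 * s3 ^ m) ^ 2 := by rw [← hp3]; ring
  have m4 : a4 ^ 2 * p4 ^ m = (a4 * s4 ^ m) ^ 2 := by rw [← hp4]; ring
  have n1 : K / a1 ^ 2 * (L / p1) ^ m =
      (a1 * s1 ^ m) * (a2 * s2 ^ m) * (a3 * s3 ^ m) * (a4 * s4 ^ m) / (a1 * s1 ^ m) ^ 2 := by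
    rw [hK, hL, ← hp1]; field_simp; rw [← mul_pow, div_mul_cancel₀ _ hs1]; ring
  have n2 : K / a2 ^ 2 * (L / p2) ^ m =
      (a1 * s1 ^ m) * (a2 * s2 ^ m) * (a3 * s3 ^ m) * (a4 * s4 ^ m) / (a2 * s2 ^ m) ^ 2 := by
    rw [hK, hL, ← hp2]; field_simp; rw [← mul_pow, div_mul_cancel₀ _ hs2]; ring
  have n3 : K / a3 ^ 2 * (L / p3) ^ m =
      (a1 * s1 ^ m) * (a2 * s2 ^ m) * (a3 * s3 ^ m) * (a4 * s4 ^ m) / (a3 * s3 ^ m) ^ 2 := by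
    rw [hK, hL, ← hp3]; field_simp; rw [← mul_pow, div_mul_cancel₀ _ hs3]; ring
  have n4 : K / a4 ^ 2 * (L / p4) ^ m =
      (a1 * s1 ^ m) * (a2 * s2 ^ m) * (a3 * s3 ^ m) * (a4 * s4 ^ m) / (a4 * s4 ^ m) ^ 2 := by
    rw [hK, hL, ← hp4]; field_simp; rw [← mul_pow, div_mul_cancel₀ _ hs4]; ring
  have mX : K * L ^ m = (a1 * s1 ^ m) * (a2 * s2 ^ m) * (a3 * s3 ^ m) * (a4 * s4 ^ m) := by
    rw [hK, hL]; ring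
  have mG : Γ m = (a1 * s1 ^ m * (a2 * s2 ^ m) - a3 * s3 ^ m * (a4 * s4 ^ m)) *
      (a1 * s1 ^ m * (a3 * s3 ^ m) - a2 * s2 ^ m * (a4 * s4 ^ m)) *
      (a1 * s1 ^ m * (a4 * s4 ^ m) - a2 * s2 ^ m * (a3 * s3 ^ m)) := by
    rw [hΓ]; ring
  have qs : ∀ a q : ℂ, qPoch a q (m + 1) = qPoch a q m * (1 - a * q ^ m) :=
    fun a q => Finset.prod_range_succ _ m
  have hDm1 := hden (m + 1)
  simp only [qs, n1, n2, n3, n4, mul_ne_zero_iff] at hDm1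
  obtain ⟨⟨⟨⟨hR1, hv1⟩, hR2, hv2⟩, hR3, hv3⟩, hR4, hv4⟩ := hDm1
  simp only [hA, mG, qs, m1, m2, m3, m4, n1, n2, n3, n4, mX]
  rw [← key]
  exact aux_div _ _ _ _ _ _ _ _ _ _ _ _ _ _ _ _ hR1 hR2 hR3 hR4 hv1 hv2 hv3 hv4
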